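/- Let U ⊆ ℂ be open and let f : U → ℂ² be holomorphic with f'(z) ≠ 0 and f^N(z) ≠ 0 for all z ∈ U, and let f*(z) = f^N(z)/(2‖f^N(z)‖²). Fix z ∈ U with (conj∘f*)'(z) ≠ 0, set w = conj((conj∘f*)'(z)) and (f*)^N(z) = f*(z) − (⟪f*(z),w⟫/⟪w,w⟫)·w. Then (f*)^N(z) ≠ 0 and the duality map is involutive: (f*)*(z) := (f*)^N(z)/(2‖(f*)^N(z)‖²) = f(z). -/

import Mathlib

open scoped BigOperators ComplexConjugate

/-- The Hermitian inner product `⟪Z,W⟫ = Z₁·conj W₁ + Z₂·conj W₂` on `ℂ²`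
(linear in the first slot). -/
noncomputable def herm (Z W : Fin 2 → ℂ) : ℂ := ∑ j, Z j * conj (W j)

/-- The normal component of the position vector of a holomorphic curve `f : U → ℂ²`:
`f^N(z) = f(z) − (⟪f z, f' z⟫/⟪f' z, f' z⟫)·f'(z)`. -/
noncomputable def posN (f : ℂ → Fin 2 → ℂ) (z : ℂ) : Fin 2 → ℂ :=
  f z - (herm (f z) (deriv f z) / herm (deriv f z) (deriv f z)) • deriv f z

/-- The dual curve `f*(z) = f^N(z)/(2‖f^N(z)‖²)`; note `‖f^N(z)‖² = ⟪f^N z, f^N z⟫`. -/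
noncomputable def dualCurve (f : ℂ → Fin 2 → ℂ) (z : ℂ) : Fin 2 → ℂ :=
  (2 * herm (posN f z) (posN f z))⁻¹ • posN f z

lemma herm_expand (Z W : Fin 2 → ℂ) :
    herm Z W = Z 0 * conj (W 0) + Z 1 * conj (W 1) := by
  simp [herm, Fin.sum_univ_two]

lemma herm_smul_left (c : ℂ) (Z W : Fin 2 → ℂ) : herm (c • Z) W = c * herm Z W := by
  simp [herm_expand]; ring

lemma herm_sub_left (X Z W : Fin 2 → ℂ) : herm (X - Z) W = herm X W - herm Z W := by
  simp [herm_expand]; ring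

lemma herm_smul_right (c : ℂ) (Z W : Fin 2 → ℂ) : herm Z (c • W) = conj c * herm Z W := by
  simp [herm_expand]; ring

lemma herm_sub_right (X Z W : Fin 2 → ℂ) : herm X (Z - W) = herm X Z - herm X W := by
  simp [herm_expand]; ring

lemma ne_zero_iff' (Z : Fin 2 → ℂ) : Z ≠ 0 ↔ Z 0 ≠ 0 ∨ Z 1 ≠ 0 := by
  constructor
  · intro h
    by_contra hc
    push_neg at hc
    exact h (funext fun j => by fin_cases j <;> simp [hc.1, hc.2])
  · rintro (h | h) hZ <;> simp [hZ] at h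

lemma herm_self_ne_zero {Z : Fin 2 → ℂ} (h : Z ≠ 0) : herm Z Z ≠ 0 := by
  rw [herm_expand, Complex.mul_conj, Complex.mul_conj]
  intro hc
  rw [← Complex.ofReal_add, Complex.ofReal_eq_zero] at hc
  have h0 : Complex.normSq (Z 0) = 0 ∧ Complex.normSq (Z 1) = 0 := by
    constructor <;> nlinarith [Complex.normSq_nonneg (Z 0), Complex.normSq_nonneg (Z 1)]
  rcases (ne_zero_iff' Z).1 h with h' | h'
  · exact h' (Complex.normSq_eq_zero.1 h0.1)
  · exact h' (Complex.normSq_eq_zero.1 h0.2)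

lemma herm_conj_self (Z : Fin 2 → ℂ) : conj (herm Z Z) = herm Z Z := by
  rw [herm_expand]; simp [mul_comm]

/-- Key linear algebra: a vector orthogonal to two nonzero mutually Hermitian-orthogonal
vectors in ℂ² is zero. -/
lemma orth_two {P F w : Fin 2 → ℂ} (hF : F ≠ 0) (hw : w ≠ 0)
    (h1 : herm P w = 0) (h2 : herm P F = 0) (h3 : herm F w = 0) : P = 0 := by
  rw [herm_expand] at h1 h2 h3
  have hdet : P 0 * F 1 - P 1 * F 0 = 0 := by
    rcases (ne_zero_iff' w).1 hw with h' | h'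
    · have hc : conj (w 0) ≠ 0 := by simpa using h'
      have : (P 0 * F 1 - P 1 * F 0) * conj (w 0) = 0 := by linear_combination F 1 * h1 - P 1 * h3
      exact (mul_eq_zero.1 this).resolve_right hc
    · have hc : conj (w 1) ≠ 0 := by simpa using h'
      have : (P 0 * F 1 - P 1 * F 0) * conj (w 1) = 0 := by linear_combination P 0 * h3 - F 0 * h1
      exact (mul_eq_zero.1 this).resolve_right hc
  have hFF : herm F F ≠ 0 := herm_self_ne_zero hF
  rw [herm_expand] at hFF
  have hP0 : P 0 * (F 0 * conj (F 0) + F 1 * conj (F 1)) = 0 := by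
    linear_combination F 0 * h2 + conj (F 1) * hdet
  have hP1 : P 1 * (F 0 * conj (F 0) + F 1 * conj (F 1)) = 0 := by
    linear_combination F 1 * h2 - conj (F 0) * hdet
  funext j
  fin_cases j
  · simpa using (mul_eq_zero.1 hP0).resolve_right hFF
  · simpa using (mul_eq_zero.1 hP1).resolve_right hFF

/-- The basic pairings of the dual curve with `f` and `f'`. -/
lemma dual_pair (f : ℂ → Fin 2 → ℂ) (ζ : ℂ) (hb : deriv f ζ ≠ 0) (hN : posN f ζ ≠ 0) :
    herm (dualCurve f ζ) (f ζ) = 1 / 2 ∧ herm (dualCurve f ζ) (deriv f ζ) = 0 := by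
  have hb' : herm (deriv f ζ) (deriv f ζ) ≠ 0 := herm_self_ne_zero hb
  have hρ : herm (posN f ζ) (posN f ζ) ≠ 0 := herm_self_ne_zero hN
  have hNFp : herm (posN f ζ) (deriv f ζ) = 0 := by
    rw [posN, herm_sub_left, herm_smul_left]
    field_simp
    ring
  have hNF : herm (posN f ζ) (posN f ζ) = herm (posN f ζ) (f ζ) := by
    nth_rewrite 2 [posN]
    rw [herm_sub_right, herm_smul_right, hNFp]
    ring
  constructor
  · rw [dualCurve, herm_smul_left, ← hNF]
    field_simp
  · rw [dualCurve, herm_smul_left, hNFp, mul_zero]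

/-- For a holomorphic curve `f : U → ℂ²` with `f' ≠ 0`, `f^N ≠ 0` on `U`, fix `z ∈ U`
with `(conj∘f*)'(z) ≠ 0`, let `w = conj((conj∘f*)'(z))` and
`(f*)^N(z) = f*(z) − (⟪f* z, w⟫/⟪w,w⟫)·w`. Then `(f*)^N(z) ≠ 0` and the duality map is
involutive: `(f*)*(z) = (f*)^N(z)/(2‖(f*)^N(z)‖²) = f(z)`. -/
theorem dualCurve_involutive (U : Set ℂ) (hU : IsOpen U)
    (f : ℂ → Fin 2 → ℂ)
    (hf : ∀ z ∈ U, DifferentiableAt ℂ f z)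
    (hf' : ∀ z ∈ U, deriv f z ≠ 0)
    (hfN : ∀ z ∈ U, posN f z ≠ 0)
    (z : ℂ) (hz : z ∈ U)
    (w : Fin 2 → ℂ)
    (hw : w = fun j => conj (deriv (fun ζ => fun j => conj (dualCurve f ζ j)) z j))
    (hwne : deriv (fun ζ => fun j => conj (dualCurve f ζ j)) z ≠ 0)
    (fsN : Fin 2 → ℂ)
    (hfsN : fsN = dualCurve f z - (herm (dualCurve f z) w / herm w w) • w) :
    fsN ≠ 0 ∧ (2 * herm fsN fsN)⁻¹ • fsN = f z := by
  classical
  set cg : ℂ → Fin 2 → ℂ := fun ζ => fun j => conj (dualCurve f ζ j) with hcg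
  set Dv : Fin 2 → ℂ := deriv cg z with hDv
  -- `cg` is differentiable at `z`, else its derivative would be zero
  have hdg : DifferentiableAt ℂ cg z := by
    by_contra h
    exact hwne (deriv_zero_of_not_differentiableAt h)
  have hG : HasDerivAt cg Dv z := hdg.hasDerivAt
  have hF : HasDerivAt f (deriv f z) z := (hf z hz).hasDerivAt
  have hF0 : HasDerivAt (fun ζ => f ζ 0) (deriv f z 0) z := (hasDerivAt_pi.1 hF) 0
  have hF1 : HasDerivAt (fun ζ => f ζ 1) (deriv f z 1) z := (hasDerivAt_pi.1 hF) 1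
  have hG0 : HasDerivAt (fun ζ => cg ζ 0) (Dv 0) z := (hasDerivAt_pi.1 hG) 0
  have hG1 : HasDerivAt (fun ζ => cg ζ 1) (Dv 1) z := (hasDerivAt_pi.1 hG) 1
  -- the function φ = Σ f_j · conj(f*_j) is constantly 1/2 on U
  have hpair : ∀ ζ ∈ U, herm (dualCurve f ζ) (f ζ) = 1 / 2 ∧
      herm (dualCurve f ζ) (deriv f ζ) = 0 := fun ζ hζ =>
    dual_pair f ζ (hf' ζ hζ) (hfN ζ hζ)
  have hconst : ∀ ζ ∈ U, f ζ 0 * cg ζ 0 + f ζ 1 * cg ζ 1 = 1 / 2 := by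
    intro ζ hζ
    have h1 := (hpair ζ hζ).1
    rw [herm_expand] at h1
    have h2 := congrArg conj h1
    simp only [map_add, map_mul, Complex.conj_conj, map_div₀, map_one, map_ofNat] at h2
    simp only [hcg]
    linear_combination h2
  have hev : (fun ζ => f ζ 0 * cg ζ 0 + f ζ 1 * cg ζ 1) =ᶠ[nhds z]
      fun _ => (1 / 2 : ℂ) :=
    Filter.eventuallyEq_of_mem (hU.mem_nhds hz) hconst
  have hd1 : HasDerivAt (fun ζ => f ζ 0 * cg ζ 0 + f ζ 1 * cg ζ 1)
      (deriv f z 0 * cg z 0 + f z 0 * Dv 0 + (deriv f z 1 * cg z 1 + f z 1 * Dv 1)) z :=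
    (hF0.mul hG0).add (hF1.mul hG1)
  have hd2 : HasDerivAt (fun ζ => f ζ 0 * cg ζ 0 + f ζ 1 * cg ζ 1) 0 z :=
    (hasDerivAt_const z ((1 : ℂ) / 2)).congr_of_eventuallyEq hev
  have hsum := hd2.unique hd1
  -- the pairing ⟪f z, f' z-part⟫ with conj of the dual curve
  have hgf' : herm (dualCurve f z) (deriv f z) = 0 := (hpair z hz).2
  have hgf : herm (dualCurve f z) (f z) = 1 / 2 := (hpair z hz).1
  have hgf'c : cg z 0 * deriv f z 0 + cg z 1 * deriv f z 1 = 0 := by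
    rw [herm_expand] at hgf'
    have h2 := congrArg conj hgf'
    simp only [map_add, map_mul, Complex.conj_conj, map_zero] at h2
    simp only [hcg]
    linear_combination h2
  have hFD : f z 0 * Dv 0 + f z 1 * Dv 1 = 0 := by linear_combination -hsum - hgf'c
  -- ⟪f z, w⟫ = 0
  have hwj : ∀ j, conj (w j) = Dv j := by
    intro j
    rw [hw]
    simp [hDv, hcg]
  have hFw : herm (f z) w = 0 := by
    rw [herm_expand, hwj 0, hwj 1]
    exact hFD
  -- w ≠ 0 and related nonvanishing
  have hwne' : w ≠ 0 := by
    intro h0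
    apply hwne
    funext j
    have := hwj j
    rw [h0] at this
    simpa using this.symm
  have hww : herm w w ≠ 0 := herm_self_ne_zero hwne'
  have hFne : f z ≠ 0 := by
    intro h0
    rw [h0] at hgf
    simp [herm_expand] at hgf
  have hm : herm (f z) (f z) ≠ 0 := herm_self_ne_zero hFne
  -- fsN is orthogonal to w and pairs to 1/2 with f z
  have hfsNw : herm fsN w = 0 := by
    rw [hfsN, herm_sub_left, herm_smul_left]
    field_simp
    ring
  have hwF : herm w (f z) = 0 := by
    have := congrArg conj hFw
    rw [herm_expand] at this ⊢
    simp only [map_add, map_mul, Complex.conj_conj, map_zero] at this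
    linear_combination this
  have hfsNF : herm fsN (f z) = 1 / 2 := by
    rw [hfsN, herm_sub_left, herm_smul_left, hwF, mul_zero, sub_zero, hgf]
  -- hence fsN = (2·⟪f z,f z⟫)⁻¹ • f z
  set m : ℂ := herm (f z) (f z) with hmdef
  have hP : fsN - (2 * m)⁻¹ • f z = 0 := by
    apply orth_two hFne hwne' _ _ hFw
    · rw [herm_sub_left, herm_smul_left, hfsNw, hFw]
      ring
    · rw [herm_sub_left, herm_smul_left, hfsNF, ← hmdef]
      field_simp
      ring
  have hfsNeq : fsN = (2 * m)⁻¹ • f z := sub_eq_zero.1 hP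
  have h2m : (2 * m)⁻¹ ≠ 0 := by
    simp only [ne_eq, inv_eq_zero, mul_eq_zero, not_or]
    exact ⟨two_ne_zero, hm⟩
  constructor
  · rw [hfsNeq]
    exact smul_ne_zero h2m hFne
  · have hmc : conj m = m := herm_conj_self (f z)
    have hermfs : herm fsN fsN = (2 * m)⁻¹ * ((2 * m)⁻¹ * m) := by
      rw [hfsNeq, herm_smul_left, herm_smul_right, map_inv₀, map_mul, hmc, ← hmdef,
        Complex.conj_ofNat]
    rw [hermfs, hfsNeq, smul_smul]
    have : (2 * ((2 * m)⁻¹ * ((2 * m)⁻¹ * m)))⁻¹ * (2 * m)⁻¹ = 1 := by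
      field_simp
    rw [this, one_smul]
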